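/- Let G ⊆ [m₁]×[m₂] be a b-sparse index set, i.e., every row index appears in at most b pairs of G and every column index appears in at most b pairs. For a matrix M ∈ ℝ^{m₁×m₂}, let G(M) denote M with all entries outside G set to zero. Then ‖G(M)‖ ≤ √b · ‖M‖. -/

import Mathlib

open scoped Matrix.Norms.L2Operator

/-- `restrict G M` is the matrix `M` with all entries outside the index set `G` set to zero. -/
def Matrix.restrict {m₁ m₂ : ℕ} (G : Finset (Fin m₁ × Fin m₂))
    (M : Matrix (Fin m₁) (Fin m₂) ℝ) : Matrix (Fin m₁) (Fin m₂) ℝ :=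
  fun i j => if (i, j) ∈ G then M i j else 0

/-- `G` is `b`-sparse: every row index appears in at most `b` pairs of `G`,
and every column index appears in at most `b` pairs of `G`. -/
def Matrix.BSparse {m₁ m₂ : ℕ} (G : Finset (Fin m₁ × Fin m₂)) (b : ℕ) : Prop :=
  (∀ i : Fin m₁, (G.filter (fun q => q.1 = i)).card ≤ b) ∧
  (∀ j : Fin m₂, (G.filter (fun q => q.2 = j)).card ≤ b)

open Finset Matrix

/-- Schur test for the ℓ²→ℓ² operator norm. -/
lemma schur_test {m₁ m₂ : ℕ} (A : Matrix (Fin m₁) (Fin m₂) ℝ) {R C : ℝ}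
    (hR0 : 0 ≤ R) (hR : ∀ i, ∑ j, |A i j| ≤ R) (hC : ∀ j, ∑ i, |A i j| ≤ C) :
    ‖A‖ ≤ Real.sqrt (R * C) := by
  rw [Matrix.l2_opNorm_def]
  refine ContinuousLinearMap.opNorm_le_bound _ (Real.sqrt_nonneg _) fun x => ?_
  have key : ∑ i, (∑ j, A i j * x j) ^ 2 ≤ (R * C) * ∑ j, (x j) ^ 2 := by
    have step1 : ∀ i, (∑ j, A i j * x j) ^ 2 ≤ R * ∑ j, |A i j| * (x j) ^ 2 := by
      intro i
      have h1 : (∑ j, A i j * x j) ^ 2 ≤ (∑ j, |A i j| * |x j|) ^ 2 := by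
        have : |∑ j, A i j * x j| ≤ ∑ j, |A i j| * |x j| := by
          calc |∑ j, A i j * x j| ≤ ∑ j, |A i j * x j| := Finset.abs_sum_le_sum_abs _ _
            _ = ∑ j, |A i j| * |x j| := by simp [abs_mul]
        calc (∑ j, A i j * x j) ^ 2 = |∑ j, A i j * x j| ^ 2 := by rw [sq_abs]
          _ ≤ (∑ j, |A i j| * |x j|) ^ 2 := by
              apply pow_le_pow_left₀ (abs_nonneg _) this
      have h2 : (∑ j, |A i j| * |x j|) ^ 2 ≤ (∑ j, |A i j|) * ∑ j, |A i j| * (x j) ^ 2 := by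
        have := Finset.sum_mul_sq_le_sq_mul_sq Finset.univ
          (fun j => Real.sqrt |A i j|) (fun j => Real.sqrt |A i j| * |x j|)
        calc (∑ j, |A i j| * |x j|) ^ 2
            = (∑ j, Real.sqrt |A i j| * (Real.sqrt |A i j| * |x j|)) ^ 2 := by
              congr 1; apply Finset.sum_congr rfl; intro j _
              rw [← mul_assoc, Real.mul_self_sqrt (abs_nonneg _)]
          _ ≤ (∑ j, Real.sqrt |A i j| ^ 2) * ∑ j, (Real.sqrt |A i j| * |x j|) ^ 2 := this
          _ = (∑ j, |A i j|) * ∑ j, |A i j| * (x j) ^ 2 := by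
              congr 1
              · apply Finset.sum_congr rfl; intro j _; exact Real.sq_sqrt (abs_nonneg _)
              · apply Finset.sum_congr rfl; intro j _
                rw [mul_pow, Real.sq_sqrt (abs_nonneg _), sq_abs]
      calc (∑ j, A i j * x j) ^ 2 ≤ (∑ j, |A i j|) * ∑ j, |A i j| * (x j) ^ 2 :=
            h1.trans h2
        _ ≤ R * ∑ j, |A i j| * (x j) ^ 2 := by
            apply mul_le_mul_of_nonneg_right (hR i)
            positivity
    calc ∑ i, (∑ j, A i j * x j) ^ 2 ≤ ∑ i, R * ∑ j, |A i j| * (x j) ^ 2 :=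
          Finset.sum_le_sum fun i _ => step1 i
      _ = R * ∑ j, (x j) ^ 2 * ∑ i, |A i j| := by
          rw [← Finset.mul_sum]; congr 1
          rw [Finset.sum_comm]
          apply Finset.sum_congr rfl; intro j _
          rw [← Finset.sum_mul, mul_comm]
      _ ≤ R * ∑ j, (x j) ^ 2 * C := by
          apply mul_le_mul_of_nonneg_left _ hR0
          apply Finset.sum_le_sum; intro j _
          exact mul_le_mul_of_nonneg_left (hC j) (sq_nonneg _)
      _ = (R * C) * ∑ j, (x j) ^ 2 := by rw [← Finset.sum_mul]; ring
  have hx : ‖x‖ = Real.sqrt (∑ j, (x j) ^ 2) := by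
    rw [EuclideanSpace.norm_eq]
    congr 1; apply Finset.sum_congr rfl; intro j _; rw [Real.norm_eq_abs, sq_abs]
  have hAx : ‖(Matrix.toEuclideanLin ≪≫ₗ LinearMap.toContinuousLinearMap) A x‖
      = Real.sqrt (∑ i, (∑ j, A i j * x j) ^ 2) := by
    rw [EuclideanSpace.norm_eq]
    congr 1; apply Finset.sum_congr rfl; intro i _
    rw [Real.norm_eq_abs, sq_abs]
    rfl
  rw [hAx, hx, ← Real.sqrt_mul' _ (by positivity : (0:ℝ) ≤ ∑ j, (x j)^2)]
  exact Real.sqrt_le_sqrt key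

/-- Each row ℓ² norm is at most the operator norm. -/
lemma row_norm_le {m₁ m₂ : ℕ} (M : Matrix (Fin m₁) (Fin m₂) ℝ) (i : Fin m₁) :
    Real.sqrt (∑ j, (M i j) ^ 2) ≤ ‖M‖ := by
  have h := Matrix.l2_opNorm_mulVec Mᴴ (EuclideanSpace.single i (1:ℝ))
  rw [Matrix.l2_opNorm_conjTranspose, EuclideanSpace.norm_single, norm_one, mul_one] at h
  refine le_trans (le_of_eq ?_) h
  rw [EuclideanSpace.norm_eq]
  congr 1; apply Finset.sum_congr rfl; intro j _
  rw [Real.norm_eq_abs, sq_abs]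
  congr 1
  show M i j = ∑ k, Mᴴ j k * (EuclideanSpace.single i (1:ℝ)) k
  simp [Matrix.conjTranspose_apply, EuclideanSpace.single_apply, Finset.sum_ite_eq']

/-- Each column ℓ² norm is at most the operator norm. -/
lemma col_norm_le {m₁ m₂ : ℕ} (M : Matrix (Fin m₁) (Fin m₂) ℝ) (j : Fin m₂) :
    Real.sqrt (∑ i, (M i j) ^ 2) ≤ ‖M‖ := by
  have h := Matrix.l2_opNorm_mulVec M (EuclideanSpace.single j (1:ℝ))
  rw [EuclideanSpace.norm_single, norm_one, mul_one] at h
  refine le_trans (le_of_eq ?_) h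
  rw [EuclideanSpace.norm_eq]
  congr 1; apply Finset.sum_congr rfl; intro i _
  rw [Real.norm_eq_abs, sq_abs]
  congr 1
  show M i j = ∑ k, M i k * (EuclideanSpace.single j (1:ℝ)) k
  simp [EuclideanSpace.single_apply, Finset.sum_ite_eq']

/-- If `G ⊆ [m₁]×[m₂]` is `b`-sparse, then zeroing out all entries of `M` outside `G`
shrinks the spectral norm up to a factor `√b` :  `‖G(M)‖ ≤ √b ‖M‖`. -/
theorem restrict_l2OpNorm_le_sqrt_sparsity {m₁ m₂ b : ℕ}
    (G : Finset (Fin m₁ × Fin m₂)) (hG : Matrix.BSparse G b)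
    (M : Matrix (Fin m₁) (Fin m₂) ℝ) :
    ‖Matrix.restrict G M‖ ≤ Real.sqrt b * ‖M‖ := by
  classical
  have hRC0 : (0:ℝ) ≤ Real.sqrt b * ‖M‖ := by positivity
  have rowb : ∀ i, ∑ j, |Matrix.restrict G M i j| ≤ Real.sqrt b * ‖M‖ := by
    intro i
    set s := Finset.univ.filter (fun j : Fin m₂ => (i, j) ∈ G) with hs
    have h1 : ∑ j, |Matrix.restrict G M i j| = ∑ j ∈ s, |M i j| := by
      rw [hs, Finset.sum_filter]
      apply Finset.sum_congr rfl; intro j _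
      simp [Matrix.restrict, apply_ite abs]
    have hcard : s.card ≤ b := by
      refine le_trans ?_ (hG.1 i)
      apply Finset.card_le_card_of_injOn (fun j => (i, j))
      · intro j hj
        simp only [hs, Finset.mem_coe, Finset.mem_filter, Finset.mem_univ, true_and] at hj ⊢
        exact ⟨hj, trivial⟩
      · intro a _ c _ h
        exact (Prod.mk.injEq _ _ _ _).mp h |>.2
    have h2 : ∑ j ∈ s, |M i j| ≤ Real.sqrt s.card * Real.sqrt (∑ j ∈ s, (M i j)^2) := by
      have h := Real.sum_mul_le_sqrt_mul_sqrt s (fun _ => 1) (fun j => |M i j|)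
      simpa [sq_abs] using h
    have h3 : Real.sqrt s.card * Real.sqrt (∑ j ∈ s, (M i j)^2)
        ≤ Real.sqrt b * ‖M‖ := by
      apply mul_le_mul
      · exact Real.sqrt_le_sqrt (by exact_mod_cast hcard)
      · refine le_trans (Real.sqrt_le_sqrt ?_) (row_norm_le M i)
        exact Finset.sum_le_sum_of_subset_of_nonneg (Finset.subset_univ s)
          (fun j _ _ => sq_nonneg _)
      · positivity
      · positivity
    rw [h1]; exact h2.trans h3
  have colb : ∀ j, ∑ i, |Matrix.restrict G M i j| ≤ Real.sqrt b * ‖M‖ := by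
    intro j
    set s := Finset.univ.filter (fun i : Fin m₁ => (i, j) ∈ G) with hs
    have h1 : ∑ i, |Matrix.restrict G M i j| = ∑ i ∈ s, |M i j| := by
      rw [hs, Finset.sum_filter]
      apply Finset.sum_congr rfl; intro i _
      simp [Matrix.restrict, apply_ite abs]
    have hcard : s.card ≤ b := by
      refine le_trans ?_ (hG.2 j)
      apply Finset.card_le_card_of_injOn (fun i => (i, j))
      · intro i hi
        simp only [hs, Finset.mem_coe, Finset.mem_filter, Finset.mem_univ, true_and] at hi ⊢
        exact ⟨hi, trivial⟩
      · intro a _ c _ h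
        exact (Prod.mk.injEq _ _ _ _).mp h |>.1
    have h2 : ∑ i ∈ s, |M i j| ≤ Real.sqrt s.card * Real.sqrt (∑ i ∈ s, (M i j)^2) := by
      have h := Real.sum_mul_le_sqrt_mul_sqrt s (fun _ => 1) (fun i => |M i j|)
      simpa [sq_abs] using h
    have h3 : Real.sqrt s.card * Real.sqrt (∑ i ∈ s, (M i j)^2)
        ≤ Real.sqrt b * ‖M‖ := by
      apply mul_le_mul
      · exact Real.sqrt_le_sqrt (by exact_mod_cast hcard)
      · refine le_trans (Real.sqrt_le_sqrt ?_) (col_norm_le M j)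
        exact Finset.sum_le_sum_of_subset_of_nonneg (Finset.subset_univ s)
          (fun i _ _ => sq_nonneg _)
      · positivity
      · positivity
    rw [h1]; exact h2.trans h3
  calc ‖Matrix.restrict G M‖
      ≤ Real.sqrt ((Real.sqrt b * ‖M‖) * (Real.sqrt b * ‖M‖)) :=
        schur_test _ hRC0 rowb colb
    _ = Real.sqrt b * ‖M‖ := Real.sqrt_mul_self hRC0
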